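/- Let 0 < θ ≤ 1, let μ be a compactly supported Borel probability measure on ℝ^d, and assume 𝒥_{u,θ}(μ) < ∞ for some u > 0. Then: (1) if 0 < η ≤ θ, then 𝒥_{w,η}(μ) < ∞ for every 0 < w ≤ (η/θ)·u; and (2) if θ < η ≤ 1, then 𝒥_{w,η}(μ) < ∞ for every 0 < w < u. -/

import Mathlib

open MeasureTheory Real ENNReal

noncomputable section

/-- Fourier transform of a measure on a real inner product space,
`μ̂(ξ) = ∫ e^{-2πi x·ξ} dμ(x)`. -/
def ftm {H : Type*} [NormedAddCommGroup H] [InnerProductSpace ℝ H] [MeasurableSpace H]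
    (μ : Measure H) (ξ : H) : ℂ :=
  ∫ x, Complex.exp (-(2 * Real.pi * (inner ℝ x ξ : ℝ)) * Complex.I) ∂μ

/-- Fourier transform of a function on ℝᵈ, `f̂(ξ) = ∫ f(x) e^{-2πi x·ξ} dx`. -/
def ftf {d : ℕ} (f : EuclideanSpace ℝ (Fin d) → ℂ) (ξ : EuclideanSpace ℝ (Fin d)) : ℂ :=
  ∫ x, f x * Complex.exp (-(2 * Real.pi * (inner ℝ x ξ : ℝ)) * Complex.I)

/-- The topological support of a measure. -/
def msupp {X : Type*} [TopologicalSpace X] [MeasurableSpace X] (μ : Measure X) : Set X :=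
  {x | ∀ U ∈ nhds x, μ U ≠ 0}

/-- The (s,θ)-energy 𝒥_{s,θ}(μ) of a measure on ℝᵈ. -/
def Jen {d : ℕ} (μ : Measure (EuclideanSpace ℝ (Fin d))) (s θ : ℝ) : ℝ≥0∞ :=
  if θ = 0 then ⨆ z : EuclideanSpace ℝ (Fin d), ENNReal.ofReal (‖ftm μ z‖ ^ 2 * ‖z‖ ^ s)
  else (∫⁻ z : EuclideanSpace ℝ (Fin d),
      ENNReal.ofReal (‖ftm μ z‖ ^ (2 / θ) * ‖z‖ ^ (s / θ - d))) ^ θ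

/-- The Fourier spectrum `dim_F^θ μ` of a measure. -/
def dimFs {d : ℕ} (μ : Measure (EuclideanSpace ℝ (Fin d))) (θ : ℝ) : ℝ :=
  sSup {s : ℝ | 0 ≤ s ∧ Jen μ s θ < ⊤}

/-- The Fourier spectrum `dim_F^θ E` of a set. -/
def dimFsSet {d : ℕ} (E : Set (EuclideanSpace ℝ (Fin d))) (θ : ℝ) : ℝ :=
  sSup {r : ℝ | ∃ μ : Measure (EuclideanSpace ℝ (Fin d)),
    IsFiniteMeasure μ ∧ μ ≠ 0 ∧ msupp μ ⊆ E ∧ r = min (dimFs μ θ) d}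

/-- The s-energy I_s(μ). -/
def Ien {d : ℕ} (μ : Measure (EuclideanSpace ℝ (Fin d))) (s : ℝ) : ℝ≥0∞ :=
  ∫⁻ x, ∫⁻ y, edist x y ^ (-s) ∂μ ∂μ

/-- Distance set between two sets. -/
def distSet {d : ℕ} (E F : Set (EuclideanSpace ℝ (Fin d))) : Set ℝ :=
  {r | ∃ x ∈ E, ∃ y ∈ F, r = dist x y}

/-- Pinned distance set. -/
def pinDistSet {d : ℕ} (x : EuclideanSpace ℝ (Fin d)) (E : Set (EuclideanSpace ℝ (Fin d))) :
    Set ℝ :=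
  (fun y => dist x y) '' E

/-- Append a real coordinate to a vector in ℝᵈ, giving a vector in ℝ^{d+1}. -/
def snocE {d : ℕ} (y : EuclideanSpace ℝ (Fin d)) (t : ℝ) : EuclideanSpace ℝ (Fin (d + 1)) :=
  (EuclideanSpace.equiv (Fin (d + 1)) ℝ).symm (Fin.snoc (fun i => y i) t)

/-- The lift map F(y) = (y, |y|²) from ℝᵈ to ℝ^{d+1}. -/
def liftMap {d : ℕ} (y : EuclideanSpace ℝ (Fin d)) : EuclideanSpace ℝ (Fin (d + 1)) :=
  snocE y (‖y‖ ^ 2)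

/-- The frequency vector τ(−2x, 1) ∈ ℝ^{d+1}. -/
def freqVec {d : ℕ} (τ : ℝ) (x : EuclideanSpace ℝ (Fin d)) : EuclideanSpace ℝ (Fin (d + 1)) :=
  τ • snocE ((-2 : ℝ) • x) 1


open Set Metric in
lemma lint_compl {d : ℕ} {b : ℝ} (hb : b < -(d:ℝ)) :
    ∫⁻ z : EuclideanSpace ℝ (Fin d) in (ball 0 1)ᶜ, ENNReal.ofReal (‖z‖ ^ b) < ⊤ := by
  have hb0 : b < 0 := hb.trans_le (neg_nonpos.mpr (Nat.cast_nonneg d))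
  have key : ∀ z : EuclideanSpace ℝ (Fin d), z ∈ (ball (0:EuclideanSpace ℝ (Fin d)) 1)ᶜ →
      ENNReal.ofReal (‖z‖ ^ b) ≤ ENNReal.ofReal ((2:ℝ) ^ (-b) * (1 + ‖z‖) ^ b) := by
    intro z hz
    rw [mem_compl_iff, mem_ball, dist_zero_right, not_lt] at hz
    apply ENNReal.ofReal_le_ofReal
    have h1 : (1:ℝ) + ‖z‖ ≤ 2 * ‖z‖ := by linarith
    have h2 : ((2:ℝ) * ‖z‖) ^ b ≤ (1 + ‖z‖) ^ b :=
      Real.rpow_le_rpow_of_nonpos (by positivity) h1 hb0.le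
    rw [Real.mul_rpow (by norm_num) (norm_nonneg z)] at h2
    calc ‖z‖ ^ b = (2:ℝ) ^ (-b) * ((2:ℝ) ^ b * ‖z‖ ^ b) := by
          rw [← mul_assoc, ← Real.rpow_add (by norm_num), neg_add_cancel, Real.rpow_zero, one_mul]
      _ ≤ (2:ℝ) ^ (-b) * (1 + ‖z‖) ^ b := by
          apply mul_le_mul_of_nonneg_left h2 (by positivity)
  calc ∫⁻ z : EuclideanSpace ℝ (Fin d) in (ball 0 1)ᶜ, ENNReal.ofReal (‖z‖ ^ b)
      ≤ ∫⁻ z : EuclideanSpace ℝ (Fin d) in (ball 0 1)ᶜ,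
          ENNReal.ofReal ((2:ℝ) ^ (-b) * (1 + ‖z‖) ^ b) :=
        setLIntegral_mono' measurableSet_ball.compl key
    _ ≤ ∫⁻ z : EuclideanSpace ℝ (Fin d), ENNReal.ofReal ((2:ℝ) ^ (-b) * (1 + ‖z‖) ^ b) :=
        setLIntegral_le_lintegral _ _
    _ = ENNReal.ofReal ((2:ℝ) ^ (-b)) *
          ∫⁻ z : EuclideanSpace ℝ (Fin d), ENNReal.ofReal ((1 + ‖z‖) ^ (-(-b))) := by
        rw [← lintegral_const_mul' _ _ ENNReal.ofReal_ne_top]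
        simp_rw [neg_neg, ← ENNReal.ofReal_mul (by positivity : (0:ℝ) ≤ (2:ℝ) ^ (-b))]
    _ < ⊤ := by
        apply ENNReal.mul_lt_top ENNReal.ofReal_lt_top
        apply finite_integral_one_add_norm
        rw [finrank_euclideanSpace_fin]
        linarith

open Set Metric in
lemma lint_ball {d : ℕ} {a : ℝ} (ha : -(d:ℝ) < a) :
    ∫⁻ z : EuclideanSpace ℝ (Fin d) in ball 0 1, ENNReal.ofReal (‖z‖ ^ a) < ⊤ := by
  rcases le_or_gt 0 a with h0 | h0
  · calc ∫⁻ z : EuclideanSpace ℝ (Fin d) in ball 0 1, ENNReal.ofReal (‖z‖ ^ a)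
        ≤ ∫⁻ _ : EuclideanSpace ℝ (Fin d) in ball 0 1, 1 := by
          apply setLIntegral_mono' measurableSet_ball
          intro z hz
          rw [mem_ball, dist_zero_right] at hz
          calc ENNReal.ofReal (‖z‖ ^ a) ≤ ENNReal.ofReal 1 :=
              ENNReal.ofReal_le_ofReal (Real.rpow_le_one (norm_nonneg z) hz.le h0)
            _ = 1 := ENNReal.ofReal_one
      _ = volume (ball (0:EuclideanSpace ℝ (Fin d)) 1) := by simp
      _ < ⊤ := measure_ball_lt_top
  · -- a < 0, layer cake
    set r : ℝ := -a with hr_def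
    have hr : 0 < r := by simp [hr_def]; linarith
    have hrd : r < d := by simp [hr_def]; linarith
    have h_meas : Measurable fun z : EuclideanSpace ℝ (Fin d) => ‖z‖ ^ a := by
      fun_prop
    have h_pos : ∀ z : EuclideanSpace ℝ (Fin d), 0 ≤ ‖z‖ ^ a := fun z => Real.rpow_nonneg (norm_nonneg z) a
    rw [lintegral_eq_lintegral_meas_le (volume.restrict (ball 0 1))
      (ae_of_all _ h_pos) h_meas.aemeasurable]
    set ν := volume.restrict (ball (0:EuclideanSpace ℝ (Fin d)) 1)
    set mB := volume (ball (0:EuclideanSpace ℝ (Fin d)) 1) with hmB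
    have hmBfin : mB < ⊤ := measure_ball_lt_top
    have hsub : ∀ t : ℝ, 0 < t →
        ν {z : EuclideanSpace ℝ (Fin d) | t ≤ ‖z‖ ^ a} ≤
          volume (closedBall (0:EuclideanSpace ℝ (Fin d)) (t ^ (-r⁻¹))) := by
      intro t ht
      refine le_trans (Measure.restrict_le_self _) (measure_mono ?_)
      intro z hz
      simp only [mem_setOf_eq] at hz
      rw [mem_closedBall, dist_zero_right]
      have hz0 : z ≠ 0 := by
        intro h
        rw [h, norm_zero, Real.zero_rpow (by linarith : a ≠ 0)] at hz
        linarith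
      have hzn : 0 < ‖z‖ := norm_pos_iff.mpr hz0
      have hle := Real.rpow_le_rpow_of_nonpos ht hz (neg_nonpos.mpr (inv_nonneg.mpr hr.le))
      have heq : (‖z‖ ^ a) ^ (-r⁻¹) = ‖z‖ := by
        rw [← Real.rpow_mul hzn.le, show a * -r⁻¹ = 1 by rw [hr_def, inv_neg, neg_neg]; exact mul_inv_cancel₀ (ne_of_lt h0), Real.rpow_one]
      rw [heq] at hle
      exact hle
    calc ∫⁻ t in Ioi (0:ℝ), ν {z : EuclideanSpace ℝ (Fin d) | t ≤ ‖z‖ ^ a}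
        ≤ ∫⁻ t in Ioc (0:ℝ) 1 ∪ Ioi 1, ν {z : EuclideanSpace ℝ (Fin d) | t ≤ ‖z‖ ^ a} :=
          lintegral_mono_set Ioi_subset_Ioc_union_Ioi
      _ ≤ (∫⁻ t in Ioc (0:ℝ) 1, ν {z : EuclideanSpace ℝ (Fin d) | t ≤ ‖z‖ ^ a})
            + ∫⁻ t in Ioi (1:ℝ), ν {z : EuclideanSpace ℝ (Fin d) | t ≤ ‖z‖ ^ a} :=
          lintegral_union_le _ _ _
      _ < ⊤ := by
          apply ENNReal.add_lt_top.2
          constructor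
          · calc (∫⁻ t in Ioc (0:ℝ) 1, ν {z : EuclideanSpace ℝ (Fin d) | t ≤ ‖z‖ ^ a})
                ≤ ∫⁻ _ in Ioc (0:ℝ) 1, mB := by
                  apply setLIntegral_mono' measurableSet_Ioc
                  intro t _
                  refine le_trans (measure_mono (subset_univ _)) ?_
                  rw [Measure.restrict_apply_univ]
              _ = mB * volume (Ioc (0:ℝ) 1) := setLIntegral_const _ _
              _ < ⊤ := by
                  apply ENNReal.mul_lt_top hmBfin
                  simp [Real.volume_Ioc]
          · have hc1 : -r⁻¹ * (d:ℝ) < -1 := by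
              rw [neg_mul, neg_lt_neg_iff, ← div_eq_inv_mul]
              exact (one_lt_div hr).mpr hrd
            calc (∫⁻ t in Ioi (1:ℝ), ν {z : EuclideanSpace ℝ (Fin d) | t ≤ ‖z‖ ^ a})
                ≤ ∫⁻ t in Ioi (1:ℝ), ENNReal.ofReal (t ^ (-r⁻¹ * (d:ℝ))) * mB := by
                  apply setLIntegral_mono' measurableSet_Ioi
                  intro t ht
                  rw [mem_Ioi] at ht
                  have ht0 : 0 < t := lt_trans one_pos ht
                  refine le_trans (hsub t ht0) ?_
                  rw [Measure.addHaar_closedBall volume (0:EuclideanSpace ℝ (Fin d))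
                    (Real.rpow_nonneg ht0.le _)]
                  rw [finrank_euclideanSpace_fin, ← Real.rpow_natCast (t ^ (-r⁻¹)) d,
                    ← Real.rpow_mul ht0.le]
              _ = (∫⁻ t in Ioi (1:ℝ), ENNReal.ofReal (t ^ (-r⁻¹ * (d:ℝ)))) * mB :=
                  lintegral_mul_const' mB _ hmBfin.ne
              _ < ⊤ := by
                  apply ENNReal.mul_lt_top _ hmBfin
                  exact (integrableOn_Ioi_rpow_of_lt hc1 one_pos).setLIntegral_lt_top


-- Auxiliary lemmas (to be inserted above stmt18)
open Set Metric in
lemma ftm_norm_le_one {d : ℕ} (μ : Measure (EuclideanSpace ℝ (Fin d)))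
    [IsProbabilityMeasure μ] (ξ : EuclideanSpace ℝ (Fin d)) : ‖ftm μ ξ‖ ≤ 1 := by
  have h : ∀ x : EuclideanSpace ℝ (Fin d),
      ‖Complex.exp (-(2 * Real.pi * (inner ℝ x ξ : ℝ)) * Complex.I)‖ = 1 := by
    intro x
    simp [Complex.norm_exp]
  calc ‖ftm μ ξ‖ ≤ 1 * (μ Set.univ).toReal :=
        norm_integral_le_of_norm_le_const (ae_of_all _ fun x => (h x).le)
    _ = 1 := by simp

lemma ftm_continuous {d : ℕ} (μ : Measure (EuclideanSpace ℝ (Fin d)))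
    [IsFiniteMeasure μ] : Continuous (ftm μ) := by
  apply continuous_of_dominated (bound := fun _ => 1)
  · intro ξ
    apply Continuous.aestronglyMeasurable
    have hinner : Continuous fun x : EuclideanSpace ℝ (Fin d) => (inner ℝ x ξ : ℝ) :=
      continuous_id.inner continuous_const
    exact Complex.continuous_exp.comp
      (((continuous_const.mul (Complex.continuous_ofReal.comp hinner)).neg).mul continuous_const)
  · intro ξ
    refine ae_of_all _ fun x => ?_
    simp [Complex.norm_exp]
  · exact integrable_const 1
  · refine ae_of_all _ fun x => ?_
    have hinner : Continuous fun ξ : EuclideanSpace ℝ (Fin d) => (inner ℝ x ξ : ℝ) :=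
      continuous_const.inner continuous_id
    exact Complex.continuous_exp.comp
      (((continuous_const.mul (Complex.continuous_ofReal.comp hinner)).neg).mul continuous_const)


open Set Metric in
/-- Lemma 5.7: monotonicity properties of the (s,θ)-energies. -/
theorem stmt18 (d : ℕ) (θ : ℝ) (hθ : 0 < θ) (hθ1 : θ ≤ 1)
    (μ : Measure (EuclideanSpace ℝ (Fin d))) [IsProbabilityMeasure μ]
    (hc : IsCompact (msupp μ))
    (u : ℝ) (hu : 0 < u) (hJ : Jen μ u θ < ⊤) :
    (∀ η : ℝ, 0 < η → η ≤ θ →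
      ∀ w : ℝ, 0 < w → w ≤ (η / θ) * u → Jen μ w η < ⊤) ∧
    (∀ η : ℝ, θ < η → η ≤ 1 →
      ∀ w : ℝ, 0 < w → w < u → Jen μ w η < ⊤) := by
  have hm : Measurable (ftm μ) := (ftm_continuous μ).measurable
  have hb1 : ∀ z, ‖ftm μ z‖ ≤ 1 := ftm_norm_le_one μ
  have hF : Measurable fun z : EuclideanSpace ℝ (Fin d) => ENNReal.ofReal ‖ftm μ z‖ :=
    hm.norm.ennreal_ofReal
  have hZ : Measurable fun z : EuclideanSpace ℝ (Fin d) => ENNReal.ofReal ‖z‖ :=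
    measurable_norm.ennreal_ofReal
  have hKu : ∫⁻ z : EuclideanSpace ℝ (Fin d),
      ENNReal.ofReal (‖ftm μ z‖ ^ (2/θ) * ‖z‖ ^ (u/θ - d)) < ⊤ := by
    rw [Jen, if_neg hθ.ne'] at hJ
    by_contra h'
    rw [not_lt, top_le_iff] at h'
    rw [h', ENNReal.top_rpow_of_pos hθ] at hJ
    exact lt_irrefl _ hJ
  have ball_part : ∀ s t : ℝ, 0 < s → 0 < t →
      ∫⁻ z : EuclideanSpace ℝ (Fin d) in ball 0 1,
        ENNReal.ofReal (‖ftm μ z‖ ^ (2/t) * ‖z‖ ^ (s/t - d)) < ⊤ := by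
    intro s t hs ht
    have hst : 0 < s / t := div_pos hs ht
    calc ∫⁻ z : EuclideanSpace ℝ (Fin d) in ball 0 1,
          ENNReal.ofReal (‖ftm μ z‖ ^ (2/t) * ‖z‖ ^ (s/t - d))
        ≤ ∫⁻ z : EuclideanSpace ℝ (Fin d) in ball 0 1, ENNReal.ofReal (‖z‖ ^ (s/t - d)) := by
          apply setLIntegral_mono' measurableSet_ball
          intro z _
          apply ENNReal.ofReal_le_ofReal
          apply mul_le_of_le_one_left (Real.rpow_nonneg (norm_nonneg z) _)
          exact Real.rpow_le_one (norm_nonneg _) (hb1 z) (by positivity)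
      _ < ⊤ := lint_ball (by linarith : -(d:ℝ) < s/t - d)
  constructor
  · -- Part 1 : η ≤ θ
    intro η hη hηθ w hw hwu
    have hwη : w / η ≤ u / θ := by
      rw [div_le_div_iff₀ hη hθ]
      have h2 : (η / θ * u) * θ = u * η := by field_simp
      nlinarith [mul_le_mul_of_nonneg_right hwu hθ.le]
    rw [Jen, if_neg hη.ne']
    have hint : ∫⁻ z : EuclideanSpace ℝ (Fin d),
        ENNReal.ofReal (‖ftm μ z‖ ^ (2/η) * ‖z‖ ^ (w/η - d)) < ⊤ := by
      rw [← lintegral_add_compl (μ := volume) _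
        (measurableSet_ball : MeasurableSet (ball (0 : EuclideanSpace ℝ (Fin d)) 1))]
      apply ENNReal.add_lt_top.2
      refine ⟨ball_part w η hw hη, ?_⟩
      calc ∫⁻ z : EuclideanSpace ℝ (Fin d) in (ball 0 1)ᶜ,
            ENNReal.ofReal (‖ftm μ z‖ ^ (2/η) * ‖z‖ ^ (w/η - d))
          ≤ ∫⁻ z : EuclideanSpace ℝ (Fin d) in (ball 0 1)ᶜ,
            ENNReal.ofReal (‖ftm μ z‖ ^ (2/θ) * ‖z‖ ^ (u/θ - d)) := by
            apply setLIntegral_mono' measurableSet_ball.compl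
            intro z hz
            rw [mem_compl_iff, mem_ball, dist_zero_right, not_lt] at hz
            apply ENNReal.ofReal_le_ofReal
            have h2 : ‖z‖ ^ (w/η - d) ≤ ‖z‖ ^ (u/θ - d) :=
              Real.rpow_le_rpow_of_exponent_le hz (by linarith)
            have h1 : ‖ftm μ z‖ ^ (2/η) ≤ ‖ftm μ z‖ ^ (2/θ) := by
              rcases eq_or_lt_of_le (norm_nonneg (ftm μ z)) with h | h
              · rw [← h, Real.zero_rpow (by positivity), Real.zero_rpow (by positivity)]
              · apply Real.rpow_le_rpow_of_exponent_ge h (hb1 z)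
                rw [div_le_div_iff₀ hθ hη]
                nlinarith
            exact mul_le_mul h1 h2 (Real.rpow_nonneg (norm_nonneg z) _)
              (Real.rpow_nonneg (norm_nonneg _) _)
        _ ≤ _ := setLIntegral_le_lintegral _ _
        _ < ⊤ := hKu
    exact ENNReal.rpow_lt_top_of_nonneg hη.le hint.ne
  · -- Part 2 : θ < η
    intro η hθη hη1 w hw hwu
    have hη : 0 < η := hθ.trans hθη
    have hθne : θ ≠ 0 := hθ.ne'
    have hηne : η ≠ 0 := hη.ne'
    have hηθne : η - θ ≠ 0 := by linarith
    rw [Jen, if_neg hη.ne']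
    have hint : ∫⁻ z : EuclideanSpace ℝ (Fin d),
        ENNReal.ofReal (‖ftm μ z‖ ^ (2/η) * ‖z‖ ^ (w/η - d)) < ⊤ := by
      rw [← lintegral_add_compl (μ := volume) _
        (measurableSet_ball : MeasurableSet (ball (0 : EuclideanSpace ℝ (Fin d)) 1))]
      apply ENNReal.add_lt_top.2
      refine ⟨ball_part w η hw hη, ?_⟩
      -- Hölder setup
      set p : ℝ := η / θ with hp_def
      set q : ℝ := η / (η - θ) with hq_def
      have hpq : p.HolderConjugate q := by
        rw [Real.holderConjugate_iff]
        constructor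
        · rw [hp_def, lt_div_iff₀ hθ]; linarith
        · rw [hp_def, hq_def]
          field_simp
          ring
      set f : EuclideanSpace ℝ (Fin d) → ℝ≥0∞ := fun z =>
        (ENNReal.ofReal ‖ftm μ z‖ ^ (2/θ) * ENNReal.ofReal ‖z‖ ^ (u/θ - d)) ^ (θ/η) with hf_def
      set g : EuclideanSpace ℝ (Fin d) → ℝ≥0∞ := fun z =>
        ENNReal.ofReal ‖z‖ ^ ((w-u)/η - (d:ℝ)*(η-θ)/η) with hg_def
      have hfm : Measurable f := ((hF.pow measurable_const).mul
        (hZ.pow measurable_const)).pow measurable_const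
      have hgm : Measurable g := hZ.pow measurable_const
      have hfg : ∀ z : EuclideanSpace ℝ (Fin d), z ∈ (ball (0:EuclideanSpace ℝ (Fin d)) 1)ᶜ →
          ENNReal.ofReal (‖ftm μ z‖ ^ (2/η) * ‖z‖ ^ (w/η - d)) = f z * g z := by
        intro z hz
        rw [mem_compl_iff, mem_ball, dist_zero_right, not_lt] at hz
        have hz0 : (0:ℝ) < ‖z‖ := lt_of_lt_of_le one_pos hz
        have hZ0 : ENNReal.ofReal ‖z‖ ≠ 0 := by
          simp only [ne_eq, ENNReal.ofReal_eq_zero, not_le]; exact hz0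
        have hZt : ENNReal.ofReal ‖z‖ ≠ ⊤ := ENNReal.ofReal_ne_top
        rw [ENNReal.ofReal_mul (Real.rpow_nonneg (norm_nonneg _) _),
          ← ENNReal.ofReal_rpow_of_nonneg (norm_nonneg _) (by positivity : (0:ℝ) ≤ 2/η),
          ← ENNReal.ofReal_rpow_of_pos hz0]
        simp only [hf_def, hg_def]
        rw [ENNReal.mul_rpow_of_nonneg _ _ (by positivity : (0:ℝ) ≤ θ/η),
          ← ENNReal.rpow_mul, ← ENNReal.rpow_mul]
        rw [show 2/θ * (θ/η) = 2/η by field_simp]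
        rw [mul_assoc, ← ENNReal.rpow_add _ _ hZ0 hZt]
        congr 1
        field_simp
        ring
      have hfp : ∀ z : EuclideanSpace ℝ (Fin d), z ∈ (ball (0:EuclideanSpace ℝ (Fin d)) 1)ᶜ →
          f z ^ p = ENNReal.ofReal (‖ftm μ z‖ ^ (2/θ) * ‖z‖ ^ (u/θ - d)) := by
        intro z hz
        rw [mem_compl_iff, mem_ball, dist_zero_right, not_lt] at hz
        have hz0 : (0:ℝ) < ‖z‖ := lt_of_lt_of_le one_pos hz
        simp only [hf_def]
        rw [← ENNReal.rpow_mul, show θ/η * p = 1 by rw [hp_def]; field_simp, ENNReal.rpow_one]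
        rw [ENNReal.ofReal_mul (Real.rpow_nonneg (norm_nonneg _) _),
          ENNReal.ofReal_rpow_of_nonneg (norm_nonneg _) (by positivity : (0:ℝ) ≤ 2/θ),
          ENNReal.ofReal_rpow_of_pos hz0]
      have hgq : ∀ z : EuclideanSpace ℝ (Fin d), z ∈ (ball (0:EuclideanSpace ℝ (Fin d)) 1)ᶜ →
          g z ^ q = ENNReal.ofReal (‖z‖ ^ ((w-u)/(η-θ) - d)) := by
        intro z hz
        rw [mem_compl_iff, mem_ball, dist_zero_right, not_lt] at hz
        have hz0 : (0:ℝ) < ‖z‖ := lt_of_lt_of_le one_pos hz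
        simp only [hg_def]
        rw [← ENNReal.rpow_mul,
          show ((w-u)/η - (d:ℝ)*(η-θ)/η) * q = (w-u)/(η-θ) - d by
            rw [hq_def]; field_simp,
          ENNReal.ofReal_rpow_of_pos hz0]
      calc ∫⁻ z : EuclideanSpace ℝ (Fin d) in (ball 0 1)ᶜ,
            ENNReal.ofReal (‖ftm μ z‖ ^ (2/η) * ‖z‖ ^ (w/η - d))
          = ∫⁻ z : EuclideanSpace ℝ (Fin d) in (ball 0 1)ᶜ, f z * g z :=
            setLIntegral_congr_fun measurableSet_ball.compl hfg
        _ ≤ (∫⁻ z : EuclideanSpace ℝ (Fin d) in (ball 0 1)ᶜ, f z ^ p) ^ (1/p) *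
              (∫⁻ z : EuclideanSpace ℝ (Fin d) in (ball 0 1)ᶜ, g z ^ q) ^ (1/q) :=
            ENNReal.lintegral_mul_le_Lp_mul_Lq _ hpq hfm.aemeasurable hgm.aemeasurable
        _ < ⊤ := by
            apply ENNReal.mul_lt_top
            · apply ENNReal.rpow_lt_top_of_nonneg (by rw [hp_def]; positivity)
              have : ∫⁻ z : EuclideanSpace ℝ (Fin d) in (ball 0 1)ᶜ, f z ^ p < ⊤ := by
                calc ∫⁻ z : EuclideanSpace ℝ (Fin d) in (ball 0 1)ᶜ, f z ^ p
                    = ∫⁻ z : EuclideanSpace ℝ (Fin d) in (ball 0 1)ᶜ,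
                        ENNReal.ofReal (‖ftm μ z‖ ^ (2/θ) * ‖z‖ ^ (u/θ - d)) :=
                      setLIntegral_congr_fun measurableSet_ball.compl hfp
                  _ ≤ _ := setLIntegral_le_lintegral _ _
                  _ < ⊤ := hKu
              exact this.ne
            · apply ENNReal.rpow_lt_top_of_nonneg (le_of_lt (by rw [hq_def]; exact one_div_pos.mpr (div_pos hη (by linarith))))
              have hb : (w-u)/(η-θ) - d < -(d:ℝ) := by
                have : (w-u)/(η-θ) < 0 := div_neg_of_neg_of_pos (by linarith) (by linarith)
                linarith
              have : ∫⁻ z : EuclideanSpace ℝ (Fin d) in (ball 0 1)ᶜ, g z ^ q < ⊤ := by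
                calc ∫⁻ z : EuclideanSpace ℝ (Fin d) in (ball 0 1)ᶜ, g z ^ q
                    = ∫⁻ z : EuclideanSpace ℝ (Fin d) in (ball 0 1)ᶜ,
                        ENNReal.ofReal (‖z‖ ^ ((w-u)/(η-θ) - d)) :=
                      setLIntegral_congr_fun measurableSet_ball.compl hgq
                  _ < ⊤ := lint_compl hb
              exact this.ne
    exact ENNReal.rpow_lt_top_of_nonneg hη.le hint.ne

end
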